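/- arXiv:2208.12716 — 6 statements merged into one kernel-verified Lean document; each statement's English description precedes it below -/
import Mathlib

section
/- Let n, m ≥ 1 be natural numbers, let L, δ ≥ 0 and b₁, b₂, b₃ > 0 be real numbers. Let σ : EuclideanSpace ℝ (Fin m) → EuclideanSpace ℝ (Fin n) be L-Lipschitz, let y, y⋆ ∈ EuclideanSpace ℝ (Fin m) satisfy ‖y − y⋆‖₂ ≤ δ, and assume σ(y)ᵢ ≥ 1/b₃ and σ(y⋆)ᵢ ≥ 1/b₃ for every i. Let z⋆, μ : Fin n → ℝ satisfy |z⋆ᵢ| ≤ b₁ and |μᵢ| ≤ b₂ for every i. Then |∑ᵢ (z⋆ᵢ − μᵢ)² · (1/(2·σ(y)ᵢ²) − 1/(2·σ(y⋆)ᵢ²))| ≤ √n · L · δ · b₃³ · (b₁ + b₂)². -/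
/-- Bound on the change of the quadratic term of a diagonal-Gaussian
log-density due to the perturbation of the standard-deviation network `σ`, with the mean
vector `μ` and latent `z⋆` held fixed. -/
theorem factor_out_quadratic_sigma_bound
    (n m : ℕ) (hn : 1 ≤ n) (hm : 1 ≤ m)
    (L δ : ℝ) (hL : 0 ≤ L) (hδ : 0 ≤ δ)
    (b₁ b₂ b₃ : ℝ) (hb₁ : 0 < b₁) (hb₂ : 0 < b₂) (hb₃ : 0 < b₃)
    (σ : EuclideanSpace ℝ (Fin m) → EuclideanSpace ℝ (Fin n))
    (hσ : ∀ a b : EuclideanSpace ℝ (Fin m), ‖σ a - σ b‖ ≤ L * ‖a - b‖)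
    (y ystar : EuclideanSpace ℝ (Fin m))
    (hy : ‖y - ystar‖ ≤ δ)
    (hσy : ∀ i : Fin n, 1 / b₃ ≤ σ y i)
    (hσystar : ∀ i : Fin n, 1 / b₃ ≤ σ ystar i)
    (zstar μ : Fin n → ℝ)
    (hz : ∀ i, |zstar i| ≤ b₁)
    (hμ : ∀ i, |μ i| ≤ b₂) :
    |∑ i : Fin n, (zstar i - μ i) ^ 2 *
        (1 / (2 * (σ y i) ^ 2) - 1 / (2 * (σ ystar i) ^ 2))| ≤
      Real.sqrt n * L * δ * b₃ ^ 3 * (b₁ + b₂) ^ 2 := by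
  have hb₃' : (0:ℝ) < 1 / b₃ := by positivity
  -- Per-coordinate bound
  have key : ∀ i : Fin n,
      |(zstar i - μ i) ^ 2 * (1 / (2 * (σ y i) ^ 2) - 1 / (2 * (σ ystar i) ^ 2))|
        ≤ (b₁ + b₂) ^ 2 * b₃ ^ 3 * |σ y i - σ ystar i| := by
    intro i
    set a := σ y i with ha_def
    set c := σ ystar i with hc_def
    have ha : 1 / b₃ ≤ a := hσy i
    have hc : 1 / b₃ ≤ c := hσystar i
    have ha0 : 0 < a := lt_of_lt_of_le hb₃' ha
    have hc0 : 0 < c := lt_of_lt_of_le hb₃' hc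
    have hab : 1 ≤ a * b₃ := by
      rw [div_le_iff₀ hb₃] at ha; linarith
    have hcb : 1 ≤ c * b₃ := by
      rw [div_le_iff₀ hb₃] at hc; linarith
    rw [abs_mul]
    have h1 : |(zstar i - μ i) ^ 2| ≤ (b₁ + b₂) ^ 2 := by
      rw [abs_of_nonneg (sq_nonneg _)]
      have h := abs_sub (zstar i) (μ i)
      have hzi := hz i; have hμi := hμ i
      nlinarith [sq_abs (zstar i - μ i), abs_nonneg (zstar i - μ i)]
    have h2 : |1 / (2 * a ^ 2) - 1 / (2 * c ^ 2)| ≤ b₃ ^ 3 * |a - c| := by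
      have hrw : 1 / (2 * a ^ 2) - 1 / (2 * c ^ 2)
          = ((c - a) * (c + a)) / (2 * a ^ 2 * c ^ 2) := by
        field_simp; ring
      rw [hrw, abs_div, abs_mul]
      rw [abs_of_pos (by positivity : (0:ℝ) < 2 * a ^ 2 * c ^ 2),
          abs_of_pos (by positivity : (0:ℝ) < c + a)]
      rw [div_le_iff₀ (by positivity : (0:ℝ) < 2 * a ^ 2 * c ^ 2)]
      have hca : |c - a| = |a - c| := abs_sub_comm c a
      rw [hca]
      have hfact : c + a ≤ b₃ ^ 3 * (2 * a ^ 2 * c ^ 2) := by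
        nlinarith [mul_pos ha0 hc0, mul_nonneg (mul_nonneg ha0.le hc0.le) hb₃.le,
          mul_nonneg ha0.le hb₃.le, mul_nonneg hc0.le hb₃.le,
          mul_le_mul hab hcb (by linarith) (by positivity)]
      calc |a - c| * (c + a) ≤ |a - c| * (b₃ ^ 3 * (2 * a ^ 2 * c ^ 2)) :=
            mul_le_mul_of_nonneg_left hfact (abs_nonneg _)
        _ = b₃ ^ 3 * |a - c| * (2 * a ^ 2 * c ^ 2) := by ring
    calc |(zstar i - μ i) ^ 2| * |1 / (2 * a ^ 2) - 1 / (2 * c ^ 2)|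
        ≤ (b₁ + b₂) ^ 2 * (b₃ ^ 3 * |a - c|) :=
          mul_le_mul h1 h2 (abs_nonneg _) (by positivity)
      _ = (b₁ + b₂) ^ 2 * b₃ ^ 3 * |a - c| := by ring
  -- Sum of coordinate differences bounded via Cauchy–Schwarz
  have hnorm : ‖σ y - σ ystar‖ = Real.sqrt (∑ i : Fin n, (σ y i - σ ystar i) ^ 2) := by
    rw [EuclideanSpace.norm_eq]
    congr 1
    apply Finset.sum_congr rfl
    intro i _
    rw [Real.norm_eq_abs, sq_abs]
    norm_num
  have hCS : ∑ i : Fin n, |σ y i - σ ystar i| ≤ Real.sqrt n * ‖σ y - σ ystar‖ := by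
    have h := Real.sum_mul_le_sqrt_mul_sqrt (Finset.univ : Finset (Fin n))
      (fun _ => (1:ℝ)) (fun i => |σ y i - σ ystar i|)
    simp only [one_mul] at h
    calc ∑ i : Fin n, |σ y i - σ ystar i|
        ≤ Real.sqrt (∑ _i : Fin n, (1:ℝ) ^ 2) *
          Real.sqrt (∑ i : Fin n, |σ y i - σ ystar i| ^ 2) := h
      _ = Real.sqrt n * ‖σ y - σ ystar‖ := by
          rw [hnorm]
          congr 1
          · simp
          · congr 1; apply Finset.sum_congr rfl; intro i _; rw [sq_abs]
  have hLip : ‖σ y - σ ystar‖ ≤ L * δ := by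
    calc ‖σ y - σ ystar‖ ≤ L * ‖y - ystar‖ := hσ y ystar
      _ ≤ L * δ := mul_le_mul_of_nonneg_left hy hL
  have hsum : ∑ i : Fin n, |σ y i - σ ystar i| ≤ Real.sqrt n * (L * δ) := by
    calc ∑ i : Fin n, |σ y i - σ ystar i| ≤ Real.sqrt n * ‖σ y - σ ystar‖ := hCS
      _ ≤ Real.sqrt n * (L * δ) :=
          mul_le_mul_of_nonneg_left hLip (Real.sqrt_nonneg _)
  calc |∑ i : Fin n, (zstar i - μ i) ^ 2 *
        (1 / (2 * (σ y i) ^ 2) - 1 / (2 * (σ ystar i) ^ 2))|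
      ≤ ∑ i : Fin n, |(zstar i - μ i) ^ 2 *
        (1 / (2 * (σ y i) ^ 2) - 1 / (2 * (σ ystar i) ^ 2))| :=
        Finset.abs_sum_le_sum_abs _ _
    _ ≤ ∑ i : Fin n, (b₁ + b₂) ^ 2 * b₃ ^ 3 * |σ y i - σ ystar i| :=
        Finset.sum_le_sum fun i _ => key i
    _ = (b₁ + b₂) ^ 2 * b₃ ^ 3 * ∑ i : Fin n, |σ y i - σ ystar i| := by
        rw [← Finset.mul_sum]
    _ ≤ (b₁ + b₂) ^ 2 * b₃ ^ 3 * (Real.sqrt n * (L * δ)) :=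
        mul_le_mul_of_nonneg_left hsum (by positivity)
    _ = Real.sqrt n * L * δ * b₃ ^ 3 * (b₁ + b₂) ^ 2 := by ring
end

section
/- Let n, m ≥ 1 be natural numbers, let L, δ ≥ 0 and b₁, b₂, b₃ > 0 be real numbers. Let μ : EuclideanSpace ℝ (Fin m) → EuclideanSpace ℝ (Fin n) be L-Lipschitz, let y, y⋆ ∈ EuclideanSpace ℝ (Fin m) satisfy ‖y − y⋆‖₂ ≤ δ, and assume |μ(y)ᵢ| ≤ b₂ and |μ(y⋆)ᵢ| ≤ b₂ for every i. Let s : Fin n → ℝ satisfy sᵢ ≥ 1/b₃ for every i, and let z⋆ : Fin n → ℝ satisfy |z⋆ᵢ| ≤ b₁ for every i. Then |∑ᵢ (1/(2·sᵢ²)) · ((z⋆ᵢ − μ(y)ᵢ)² − (z⋆ᵢ − μ(y⋆)ᵢ)²)| ≤ √n · L · δ · (b₁ + b₂) · b₃². -/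
/-- Bound on the change of the quadratic term of a diagonal-Gaussian
log-density due to the perturbation of the mean network `μ`, with the standard deviations
`s` and latent `z⋆` held fixed. -/
theorem factor_out_quadratic_mu_bound
    (n m : ℕ) (hn : 1 ≤ n) (hm : 1 ≤ m)
    (L δ : ℝ) (hL : 0 ≤ L) (hδ : 0 ≤ δ)
    (b₁ b₂ b₃ : ℝ) (hb₁ : 0 < b₁) (hb₂ : 0 < b₂) (hb₃ : 0 < b₃)
    (μ : EuclideanSpace ℝ (Fin m) → EuclideanSpace ℝ (Fin n))
    (hμlip : ∀ a b : EuclideanSpace ℝ (Fin m), ‖μ a - μ b‖ ≤ L * ‖a - b‖)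
    (y ystar : EuclideanSpace ℝ (Fin m))
    (hy : ‖y - ystar‖ ≤ δ)
    (hμy : ∀ i : Fin n, |μ y i| ≤ b₂)
    (hμystar : ∀ i : Fin n, |μ ystar i| ≤ b₂)
    (s : Fin n → ℝ) (hs : ∀ i, 1 / b₃ ≤ s i)
    (zstar : Fin n → ℝ) (hz : ∀ i, |zstar i| ≤ b₁) :
    |∑ i : Fin n, (1 / (2 * (s i) ^ 2)) *
        ((zstar i - μ y i) ^ 2 - (zstar i - μ ystar i) ^ 2)| ≤
      Real.sqrt n * L * δ * (b₁ + b₂) * b₃ ^ 2 := by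
  set d : Fin n → ℝ := fun i => μ y i - μ ystar i with hd
  have hC : 0 ≤ (b₁ + b₂) * b₃ ^ 2 := by positivity
  -- per-term bound
  have hterm : ∀ i : Fin n,
      |(1 / (2 * (s i) ^ 2)) * ((zstar i - μ y i) ^ 2 - (zstar i - μ ystar i) ^ 2)|
        ≤ (b₁ + b₂) * b₃ ^ 2 * |d i| := by
    intro i
    have hsi : 1 / b₃ ≤ s i := hs i
    have hsipos : 0 < s i := lt_of_lt_of_le (by positivity) hsi
    have hcoef : 1 / (2 * (s i) ^ 2) ≤ b₃ ^ 2 / 2 := by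
      rw [div_le_div_iff₀ (by positivity) (by norm_num)]
      have h2 : 1 / b₃ ^ 2 ≤ (s i) ^ 2 := by
        have := pow_le_pow_left₀ (by positivity : (0:ℝ) ≤ 1 / b₃) hsi 2
        simpa [div_pow] using this
      have hb3sq : b₃ ^ 2 * (1 / b₃ ^ 2) = 1 := by field_simp
      nlinarith [mul_le_mul_of_nonneg_left h2 (sq_nonneg b₃)]
    have hfac : (zstar i - μ y i) ^ 2 - (zstar i - μ ystar i) ^ 2
        = (2 * zstar i - μ y i - μ ystar i) * (- d i) := by ring
    have habs : |(zstar i - μ y i) ^ 2 - (zstar i - μ ystar i) ^ 2|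
        ≤ 2 * (b₁ + b₂) * |d i| := by
      rw [hfac, abs_mul, abs_neg]
      have h1 : |2 * zstar i - μ y i - μ ystar i| ≤ 2 * (b₁ + b₂) := by
        have := hz i; have := hμy i; have := hμystar i
        have h := abs_sub (2 * zstar i - μ y i) (μ ystar i)
        calc |2 * zstar i - μ y i - μ ystar i|
            ≤ |2 * zstar i| + |μ y i| + |μ ystar i| := by
              calc |2 * zstar i - μ y i - μ ystar i|
                  ≤ |2 * zstar i - μ y i| + |μ ystar i| := abs_sub _ _
                _ ≤ |2 * zstar i| + |μ y i| + |μ ystar i| := by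
                    have := abs_sub (2 * zstar i) (μ y i); linarith
          _ ≤ 2 * (b₁ + b₂) := by
              rw [abs_mul]; simp only [abs_two]
              have := hz i; have := hμy i; have := hμystar i; linarith
      exact mul_le_mul_of_nonneg_right h1 (abs_nonneg _)
    rw [abs_mul]
    have hco : |1 / (2 * (s i) ^ 2)| = 1 / (2 * (s i) ^ 2) := abs_of_pos (by positivity)
    rw [hco]
    calc (1 / (2 * (s i) ^ 2)) * |(zstar i - μ y i) ^ 2 - (zstar i - μ ystar i) ^ 2|
        ≤ (b₃ ^ 2 / 2) * (2 * (b₁ + b₂) * |d i|) := by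
          apply mul_le_mul hcoef habs (abs_nonneg _) (by positivity)
      _ = (b₁ + b₂) * b₃ ^ 2 * |d i| := by ring
  -- Cauchy–Schwarz: ∑ |d i| ≤ √n ‖μ y - μ ystar‖
  have hcs : ∑ i : Fin n, |d i| ≤ Real.sqrt n * ‖μ y - μ ystar‖ := by
    have hsq := Finset.sum_mul_sq_le_sq_mul_sq Finset.univ
        (fun _ : Fin n => (1 : ℝ)) (fun i => |d i|)
    simp only [one_mul, one_pow] at hsq
    have hnorm : ‖μ y - μ ystar‖ = Real.sqrt (∑ i : Fin n, |d i| ^ 2) := by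
      simp [EuclideanSpace.norm_eq, hd, Real.norm_eq_abs, sq_abs]
    have h1 : ∑ i : Fin n, |d i| ≤ Real.sqrt ((n : ℝ) * ∑ i : Fin n, |d i| ^ 2) := by
      rw [Real.le_sqrt (Finset.sum_nonneg fun i _ => abs_nonneg _)
        (by positivity)]
      simpa using hsq
    calc ∑ i : Fin n, |d i| ≤ Real.sqrt ((n : ℝ) * ∑ i : Fin n, |d i| ^ 2) := h1
      _ = Real.sqrt n * ‖μ y - μ ystar‖ := by
          rw [Real.sqrt_mul (Nat.cast_nonneg n), hnorm]
  have hlip : ‖μ y - μ ystar‖ ≤ L * δ := by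
    calc ‖μ y - μ ystar‖ ≤ L * ‖y - ystar‖ := hμlip y ystar
      _ ≤ L * δ := mul_le_mul_of_nonneg_left hy hL
  calc |∑ i : Fin n, (1 / (2 * (s i) ^ 2)) *
        ((zstar i - μ y i) ^ 2 - (zstar i - μ ystar i) ^ 2)|
      ≤ ∑ i : Fin n, |(1 / (2 * (s i) ^ 2)) *
        ((zstar i - μ y i) ^ 2 - (zstar i - μ ystar i) ^ 2)| := Finset.abs_sum_le_sum_abs _ _
    _ ≤ ∑ i : Fin n, (b₁ + b₂) * b₃ ^ 2 * |d i| :=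
        Finset.sum_le_sum fun i _ => hterm i
    _ = (b₁ + b₂) * b₃ ^ 2 * ∑ i : Fin n, |d i| := by rw [← Finset.mul_sum]
    _ ≤ (b₁ + b₂) * b₃ ^ 2 * (Real.sqrt n * (L * δ)) := by
        apply mul_le_mul_of_nonneg_left _ hC
        calc ∑ i : Fin n, |d i| ≤ Real.sqrt n * ‖μ y - μ ystar‖ := hcs
          _ ≤ Real.sqrt n * (L * δ) :=
              mul_le_mul_of_nonneg_left hlip (Real.sqrt_nonneg _)
    _ = Real.sqrt n * L * δ * (b₁ + b₂) * b₃ ^ 2 := by ring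
end

section
/- Let n, m ≥ 1 be natural numbers, let L, δ ≥ 0 and b₁, b₂, b₃ > 0 be real numbers. Let μ, σ : EuclideanSpace ℝ (Fin m) → EuclideanSpace ℝ (Fin n) both be L-Lipschitz, and let y, y⋆ ∈ EuclideanSpace ℝ (Fin m) satisfy ‖y − y⋆‖₂ ≤ δ. Assume for all i: σ(y)ᵢ ≥ 1/b₃, σ(y⋆)ᵢ ≥ 1/b₃, |μ(y)ᵢ| ≤ b₂, |μ(y⋆)ᵢ| ≤ b₂. Let z⋆ : Fin n → ℝ satisfy |z⋆ᵢ| ≤ b₁ for every i. Then |ℓ(z⋆; μ(y), σ(y)) − ℓ(z⋆; μ(y⋆), σ(y⋆))| ≤ L · δ · √n · ((b₁ + b₂)²·b₃³ + (b₁ + b₂)·b₃² + b₃). -/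
/-- The diagonal-Gaussian log-density
`ℓ(z; μ, s) = −(n/2)·log(2π) − ∑ᵢ log sᵢ − ∑ᵢ (zᵢ − μᵢ)²/(2 sᵢ²)`. -/
noncomputable def gaussLogDensity (n : ℕ) (z μ s : Fin n → ℝ) : ℝ :=
  -((n : ℝ) / 2) * Real.log (2 * Real.pi) - ∑ i, Real.log (s i)
    - ∑ i, (z i - μ i) ^ 2 / (2 * (s i) ^ 2)

-- log is c-Lipschitz on [1/c, ∞)
lemma log_lip {c a b : ℝ} (hc : 0 < c) (ha : 1 / c ≤ a) (hb : 1 / c ≤ b) :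
    |Real.log a - Real.log b| ≤ c * |a - b| := by
  have hcpos : 0 < 1 / c := by positivity
  have ha0 : 0 < a := lt_of_lt_of_le hcpos ha
  have hb0 : 0 < b := lt_of_lt_of_le hcpos hb
  rcases le_total b a with h | h
  · rw [abs_of_nonneg (by nlinarith [Real.log_le_log hb0 h] : (0:ℝ) ≤ Real.log a - Real.log b),
      abs_of_nonneg (by linarith)]
    have h1 : Real.log a - Real.log b = Real.log (a / b) := by
      rw [Real.log_div ha0.ne' hb0.ne']
    rw [h1]
    have h2 : Real.log (a / b) ≤ a / b - 1 :=
      Real.log_le_sub_one_of_pos (by positivity)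
    have h3 : a / b - 1 = (a - b) / b := by field_simp
    have h4 : (a - b) / b ≤ c * (a - b) := by
      rw [div_le_iff₀ hb0]
      have : 1 ≤ c * b := by
        rw [div_le_iff₀ hc] at hb; linarith
      nlinarith
    linarith
  · rw [abs_of_nonpos (by nlinarith [Real.log_le_log ha0 h] : Real.log a - Real.log b ≤ 0),
      abs_of_nonpos (by linarith)]
    have h1 : Real.log b - Real.log a = Real.log (b / a) := by
      rw [Real.log_div hb0.ne' ha0.ne']
    have h2 : Real.log (b / a) ≤ b / a - 1 :=
      Real.log_le_sub_one_of_pos (by positivity)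
    have h3 : b / a - 1 = (b - a) / a := by field_simp
    have h4 : (b - a) / a ≤ c * (b - a) := by
      rw [div_le_iff₀ ha0]
      have : 1 ≤ c * a := by
        rw [div_le_iff₀ hc] at ha; linarith
      nlinarith
    linarith

set_option maxHeartbeats 1000000 in
lemma quad_lip {b₁ b₂ b₃ z p q a b : ℝ} (hb₁ : 0 < b₁) (hb₂ : 0 < b₂) (hb₃ : 0 < b₃)
    (hz : |z| ≤ b₁) (hp : |p| ≤ b₂) (hq : |q| ≤ b₂)
    (ha : 1 / b₃ ≤ a) (hb : 1 / b₃ ≤ b) :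
    |(z - p) ^ 2 / (2 * a ^ 2) - (z - q) ^ 2 / (2 * b ^ 2)| ≤
      (b₁ + b₂) * b₃ ^ 2 * |p - q| + (b₁ + b₂) ^ 2 * b₃ ^ 3 * |a - b| := by
  have hcpos : 0 < 1 / b₃ := by positivity
  have ha0 : 0 < a := lt_of_lt_of_le hcpos ha
  have hb0 : 0 < b := lt_of_lt_of_le hcpos hb
  have hza : 1 ≤ b₃ * a := by rw [div_le_iff₀ hb₃] at ha; linarith
  have hzb : 1 ≤ b₃ * b := by rw [div_le_iff₀ hb₃] at hb; linarith
  have habs := abs_le.mp hz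
  have hpabs := abs_le.mp hp
  have hqabs := abs_le.mp hq
  have key : |(z - p) ^ 2 / (2 * a ^ 2) - (z - q) ^ 2 / (2 * b ^ 2)| ≤
      |(z - p) ^ 2 / (2 * a ^ 2) - (z - q) ^ 2 / (2 * a ^ 2)| +
      |(z - q) ^ 2 / (2 * a ^ 2) - (z - q) ^ 2 / (2 * b ^ 2)| := abs_sub_le _ _ _
  have t1 : |(z - p) ^ 2 / (2 * a ^ 2) - (z - q) ^ 2 / (2 * a ^ 2)| ≤
      (b₁ + b₂) * b₃ ^ 2 * |p - q| := by
    have e1 : (z - p) ^ 2 / (2 * a ^ 2) - (z - q) ^ 2 / (2 * a ^ 2) =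
        ((q - p) * (2 * z - p - q)) / (2 * a ^ 2) := by ring
    rw [e1, abs_div, abs_of_pos (by positivity : (0:ℝ) < 2 * a ^ 2), abs_mul]
    rw [div_le_iff₀ (by positivity : (0:ℝ) < 2 * a ^ 2)]
    have h2z : |2 * z - p - q| ≤ 2 * (b₁ + b₂) := by
      rw [abs_le]; constructor <;> nlinarith
    rw [abs_sub_comm q p]
    have hmain : |p - q| * |2 * z - p - q| ≤ |p - q| * (2 * (b₁ + b₂)) :=
      mul_le_mul_of_nonneg_left h2z (abs_nonneg _)
    have h1 : 1 ≤ b₃ ^ 2 * a ^ 2 := by nlinarith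
    have h0 : (0:ℝ) ≤ |p - q| * (b₁ + b₂) := by positivity
    nlinarith [mul_le_mul_of_nonneg_left h1 h0]
  have t2 : |(z - q) ^ 2 / (2 * a ^ 2) - (z - q) ^ 2 / (2 * b ^ 2)| ≤
      (b₁ + b₂) ^ 2 * b₃ ^ 3 * |a - b| := by
    have e1 : (z - q) ^ 2 / (2 * a ^ 2) - (z - q) ^ 2 / (2 * b ^ 2) =
        ((z - q) ^ 2 * ((b - a) * (b + a))) / (2 * a ^ 2 * b ^ 2) := by
      field_simp
      ring
    rw [e1, abs_div, abs_of_pos (by positivity : (0:ℝ) < 2 * a ^ 2 * b ^ 2)]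
    rw [div_le_iff₀ (by positivity : (0:ℝ) < 2 * a ^ 2 * b ^ 2)]
    rw [abs_mul, abs_mul]
    have hzq : |(z - q) ^ 2| ≤ (b₁ + b₂) ^ 2 := by
      rw [abs_of_nonneg (sq_nonneg _)]
      nlinarith [habs.1, habs.2, hqabs.1, hqabs.2]
    rw [abs_sub_comm b a, abs_of_pos (by linarith : (0:ℝ) < b + a)]
    have hkey : (b + a) ≤ b₃ ^ 3 * (2 * a ^ 2 * b ^ 2) := by
      have c1 : (1:ℝ) ≤ (b₃ * a) * (b₃ * b) := by nlinarith
      have c2 : (1:ℝ) ≤ (b₃ * a) * ((b₃ * b) * (b₃ * b)) := by nlinarith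
      have c3 : (1:ℝ) ≤ (b₃ * b) * ((b₃ * a) * (b₃ * a)) := by nlinarith
      have h1 : a ≤ b₃ ^ 3 * a ^ 2 * b ^ 2 := by
        nlinarith [mul_le_mul_of_nonneg_left c2 ha0.le]
      have h2 : b ≤ b₃ ^ 3 * a ^ 2 * b ^ 2 := by
        nlinarith [mul_le_mul_of_nonneg_left c3 hb0.le]
      nlinarith
    have h4 : |(z - q) ^ 2| * (|a - b| * (b + a)) ≤
        (b₁ + b₂) ^ 2 * (|a - b| * (b + a)) := by
      apply mul_le_mul_of_nonneg_right hzq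
      positivity
    have h5 : (b₁ + b₂) ^ 2 * (|a - b| * (b + a)) ≤
        (b₁ + b₂) ^ 2 * (|a - b| * (b₃ ^ 3 * (2 * a ^ 2 * b ^ 2))) := by
      apply mul_le_mul_of_nonneg_left _ (by positivity)
      exact mul_le_mul_of_nonneg_left hkey (abs_nonneg _)
    nlinarith [h4, h5]
  linarith

-- ℓ¹ ≤ √n · ℓ²
lemma sum_abs_le_sqrt_card {n : ℕ} (v : Fin n → ℝ) :
    ∑ i, |v i| ≤ Real.sqrt n * Real.sqrt (∑ i, v i ^ 2) := by
  have h := Finset.sum_mul_sq_le_sq_mul_sq Finset.univ (fun _ => (1:ℝ)) (fun i => |v i|)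
  simp only [one_mul, one_pow, sq_abs] at h
  have h1 : (∑ i : Fin n, |v i|) ^ 2 ≤ (n : ℝ) * ∑ i, v i ^ 2 := by
    simpa [Finset.card_univ] using h
  have h2 : ∑ i : Fin n, |v i| ≤ Real.sqrt ((n : ℝ) * ∑ i, v i ^ 2) := by
    have h3 := Real.sqrt_le_sqrt h1
    rwa [Real.sqrt_sq (by positivity)] at h3
  rwa [Real.sqrt_mul (by positivity) ] at h2

/-- Perturbing only the conditioning input `y` of the Gaussian
parameters `(μ(y), σ(y))`, with the evaluated latent `z⋆` held fixed, changes the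
log-density by at most `L·δ·√n·((b₁+b₂)²b₃³ + (b₁+b₂)b₃² + b₃)`. -/
theorem factor_out_param_perturbation_bound
    (n m : ℕ) (hn : 1 ≤ n) (hm : 1 ≤ m)
    (L δ : ℝ) (hL : 0 ≤ L) (hδ : 0 ≤ δ)
    (b₁ b₂ b₃ : ℝ) (hb₁ : 0 < b₁) (hb₂ : 0 < b₂) (hb₃ : 0 < b₃)
    (μ σ : EuclideanSpace ℝ (Fin m) → EuclideanSpace ℝ (Fin n))
    (hμlip : ∀ a b : EuclideanSpace ℝ (Fin m), ‖μ a - μ b‖ ≤ L * ‖a - b‖)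
    (hσlip : ∀ a b : EuclideanSpace ℝ (Fin m), ‖σ a - σ b‖ ≤ L * ‖a - b‖)
    (y ystar : EuclideanSpace ℝ (Fin m))
    (hy : ‖y - ystar‖ ≤ δ)
    (hσy : ∀ i : Fin n, 1 / b₃ ≤ σ y i)
    (hσystar : ∀ i : Fin n, 1 / b₃ ≤ σ ystar i)
    (hμy : ∀ i : Fin n, |μ y i| ≤ b₂)
    (hμystar : ∀ i : Fin n, |μ ystar i| ≤ b₂)
    (zstar : Fin n → ℝ) (hz : ∀ i, |zstar i| ≤ b₁) :
    |gaussLogDensity n zstar (μ y) (σ y) - gaussLogDensity n zstar (μ ystar) (σ ystar)| ≤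
      L * δ * Real.sqrt n *
        ((b₁ + b₂) ^ 2 * b₃ ^ 3 + (b₁ + b₂) * b₃ ^ 2 + b₃) := by
  have hLd : ‖σ y - σ ystar‖ ≤ L * δ :=
    (hσlip y ystar).trans (mul_le_mul_of_nonneg_left hy hL)
  have hLdμ : ‖μ y - μ ystar‖ ≤ L * δ :=
    (hμlip y ystar).trans (mul_le_mul_of_nonneg_left hy hL)
  have norm_eq : ∀ f g : EuclideanSpace ℝ (Fin n),
      ‖f - g‖ = Real.sqrt (∑ i, (f i - g i) ^ 2) := by
    intro f g
    rw [EuclideanSpace.norm_eq]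
    congr 1
    refine Finset.sum_congr rfl fun i _ => ?_
    simp [Real.norm_eq_abs, sq_abs]
  have Sσ : ∑ i, |σ y i - σ ystar i| ≤ Real.sqrt n * (L * δ) := by
    refine (sum_abs_le_sqrt_card _).trans ?_
    refine mul_le_mul_of_nonneg_left ?_ (Real.sqrt_nonneg _)
    rw [← norm_eq]; exact hLd
  have Sμ : ∑ i, |μ y i - μ ystar i| ≤ Real.sqrt n * (L * δ) := by
    refine (sum_abs_le_sqrt_card _).trans ?_
    refine mul_le_mul_of_nonneg_left ?_ (Real.sqrt_nonneg _)
    rw [← norm_eq]; exact hLdμ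
  have hdiff : gaussLogDensity n zstar (μ y) (σ y) -
      gaussLogDensity n zstar (μ ystar) (σ ystar) =
      ∑ i, ((Real.log (σ ystar i) - Real.log (σ y i)) +
        ((zstar i - μ ystar i) ^ 2 / (2 * (σ ystar i) ^ 2) -
         (zstar i - μ y i) ^ 2 / (2 * (σ y i) ^ 2))) := by
    simp only [gaussLogDensity]
    rw [Finset.sum_add_distrib, Finset.sum_sub_distrib, Finset.sum_sub_distrib]
    ring
  have per : ∀ i : Fin n, |(Real.log (σ ystar i) - Real.log (σ y i)) +
        ((zstar i - μ ystar i) ^ 2 / (2 * (σ ystar i) ^ 2) -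
         (zstar i - μ y i) ^ 2 / (2 * (σ y i) ^ 2))| ≤
      ((b₁ + b₂) ^ 2 * b₃ ^ 3 + b₃) * |σ y i - σ ystar i| +
        ((b₁ + b₂) * b₃ ^ 2) * |μ y i - μ ystar i| := by
    intro i
    have l1 := log_lip hb₃ (hσystar i) (hσy i)
    have l2 := quad_lip hb₁ hb₂ hb₃ (hz i) (hμystar i) (hμy i) (hσystar i) (hσy i)
    rw [abs_sub_comm (σ ystar i) (σ y i)] at l1
    rw [abs_sub_comm (μ ystar i) (μ y i), abs_sub_comm (σ ystar i) (σ y i)] at l2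
    calc _ ≤ |Real.log (σ ystar i) - Real.log (σ y i)| +
        |(zstar i - μ ystar i) ^ 2 / (2 * (σ ystar i) ^ 2) -
         (zstar i - μ y i) ^ 2 / (2 * (σ y i) ^ 2)| := abs_add_le _ _
      _ ≤ _ := by nlinarith [l1, l2, abs_nonneg (σ y i - σ ystar i),
          abs_nonneg (μ y i - μ ystar i)]
  rw [hdiff]
  calc |∑ i, ((Real.log (σ ystar i) - Real.log (σ y i)) +
        ((zstar i - μ ystar i) ^ 2 / (2 * (σ ystar i) ^ 2) -
         (zstar i - μ y i) ^ 2 / (2 * (σ y i) ^ 2)))|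
      ≤ ∑ i, |(Real.log (σ ystar i) - Real.log (σ y i)) +
        ((zstar i - μ ystar i) ^ 2 / (2 * (σ ystar i) ^ 2) -
         (zstar i - μ y i) ^ 2 / (2 * (σ y i) ^ 2))| :=
        Finset.abs_sum_le_sum_abs _ _
    _ ≤ ∑ i, (((b₁ + b₂) ^ 2 * b₃ ^ 3 + b₃) * |σ y i - σ ystar i| +
        ((b₁ + b₂) * b₃ ^ 2) * |μ y i - μ ystar i|) :=
        Finset.sum_le_sum fun i _ => per i
    _ = ((b₁ + b₂) ^ 2 * b₃ ^ 3 + b₃) * ∑ i, |σ y i - σ ystar i| +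
        ((b₁ + b₂) * b₃ ^ 2) * ∑ i, |μ y i - μ ystar i| := by
        rw [Finset.sum_add_distrib, Finset.mul_sum, Finset.mul_sum]
    _ ≤ ((b₁ + b₂) ^ 2 * b₃ ^ 3 + b₃) * (Real.sqrt n * (L * δ)) +
        ((b₁ + b₂) * b₃ ^ 2) * (Real.sqrt n * (L * δ)) := by
        gcongr <;> positivity
    _ = L * δ * Real.sqrt n *
        ((b₁ + b₂) ^ 2 * b₃ ^ 3 + (b₁ + b₂) * b₃ ^ 2 + b₃) := by ring
end

section
/- Let n ≥ 1 be a natural number and b₁, b₂, b₃ > 0 be real numbers. Let μ, s : Fin n → ℝ satisfy |μᵢ| ≤ b₂ and sᵢ ≥ 1/b₃ for every i, and let z, z⋆ : Fin n → ℝ satisfy |zᵢ| ≤ b₁ and |z⋆ᵢ| ≤ b₁ for every i. Then |ℓ(z; μ, s) − ℓ(z⋆; μ, s)| ≤ √n · (b₁ + b₂) · b₃² · ‖z − z⋆‖₂. -/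
/-- With the Gaussian parameters held fixed, the diagonal-Gaussian
log-density is `√n·(b₁+b₂)·b₃²`-Lipschitz in the latent `z` (Euclidean norm) on the
sup-norm ball of radius `b₁`. -/
theorem gauss_log_density_latent_lipschitz
    (n : ℕ) (hn : 1 ≤ n)
    (b₁ b₂ b₃ : ℝ) (hb₁ : 0 < b₁) (hb₂ : 0 < b₂) (hb₃ : 0 < b₃)
    (μ s : Fin n → ℝ)
    (hμ : ∀ i, |μ i| ≤ b₂) (hs : ∀ i, 1 / b₃ ≤ s i)
    (z zstar : EuclideanSpace ℝ (Fin n))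
    (hz : ∀ i, |z i| ≤ b₁) (hzstar : ∀ i, |zstar i| ≤ b₁) :
    |gaussLogDensity n z μ s - gaussLogDensity n zstar μ s| ≤
      Real.sqrt n * (b₁ + b₂) * b₃ ^ 2 * ‖z - zstar‖ := by
  have hspos : ∀ i, 0 < s i := fun i =>
    lt_of_lt_of_le (by positivity) (hs i)
  have hinv : ∀ i, 1 / (s i) ^ 2 ≤ b₃ ^ 2 := by
    intro i
    have h1 : 1 / s i ≤ b₃ := by
      rw [div_le_iff₀ (hspos i)]
      have := hs i
      rw [div_le_iff₀ hb₃] at this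
      linarith
    have h0 : 0 ≤ 1 / s i := le_of_lt (by have := hspos i; positivity)
    calc 1 / (s i) ^ 2 = (1 / s i) ^ 2 := by rw [div_pow, one_pow]
      _ ≤ b₃ ^ 2 := pow_le_pow_left₀ h0 h1 2
  -- rewrite the difference as a single sum
  have hdiff : gaussLogDensity n z μ s - gaussLogDensity n zstar μ s
      = ∑ i, ((zstar i - μ i) ^ 2 - (z i - μ i) ^ 2) / (2 * (s i) ^ 2) := by
    unfold gaussLogDensity
    have h : ∑ i, ((zstar i - μ i) ^ 2 - (z i - μ i) ^ 2) / (2 * (s i) ^ 2)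
        = ∑ i, (zstar i - μ i) ^ 2 / (2 * (s i) ^ 2)
          - ∑ i, (z i - μ i) ^ 2 / (2 * (s i) ^ 2) := by
      rw [← Finset.sum_sub_distrib]
      exact Finset.sum_congr rfl fun i _ => by ring
    rw [h]; ring
  -- termwise bound
  have hterm : ∀ i, |((zstar i - μ i) ^ 2 - (z i - μ i) ^ 2) / (2 * (s i) ^ 2)|
      ≤ (b₁ + b₂) * b₃ ^ 2 * |z i - zstar i| := by
    intro i
    have hfac : (zstar i - μ i) ^ 2 - (z i - μ i) ^ 2
        = (zstar i - z i) * (zstar i + z i - 2 * μ i) := by ring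
    have hsum : |zstar i + z i - 2 * μ i| ≤ 2 * (b₁ + b₂) := by
      have h1 := abs_sub (zstar i + z i) (2 * μ i)
      have h2 := abs_add_le (zstar i) (z i)
      have h3 : |2 * μ i| = 2 * |μ i| := by rw [abs_mul]; norm_num
      have := hz i; have := hzstar i; have := hμ i
      nlinarith [abs_sub_abs_le_abs_sub (zstar i + z i) (2*μ i),
        abs_sub (zstar i + z i) (2 * μ i)]
    rw [hfac, abs_div, abs_mul]
    have hdenpos : (0:ℝ) < |2 * (s i)^2| := by
      have := hspos i; rw [abs_of_pos (by positivity)]; positivity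
    rw [div_le_iff₀ hdenpos]
    have habs : |2 * (s i)^2| = 2 * (s i)^2 := abs_of_pos (by have := hspos i; positivity)
    rw [habs]
    have hzz : |zstar i - z i| = |z i - zstar i| := abs_sub_comm _ _
    rw [hzz]
    have h2inv : 1 ≤ b₃ ^ 2 * (s i) ^ 2 := by
      have := hinv i
      have hs2 : (0:ℝ) < (s i)^2 := by have := hspos i; positivity
      rw [div_le_iff₀ hs2] at this
      linarith
    have habsnn : (0:ℝ) ≤ |z i - zstar i| := abs_nonneg _
    have hA := mul_le_mul_of_nonneg_left hsum habsnn
    have hB : (0:ℝ) ≤ |z i - zstar i| * (2 * (b₁ + b₂)) := by positivity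
    have hC := mul_le_mul_of_nonneg_left h2inv hB
    nlinarith [hA, hC]
  -- sum bound
  have hl1 : |gaussLogDensity n z μ s - gaussLogDensity n zstar μ s|
      ≤ (b₁ + b₂) * b₃ ^ 2 * ∑ i, |z i - zstar i| := by
    rw [hdiff]
    calc |∑ i, ((zstar i - μ i) ^ 2 - (z i - μ i) ^ 2) / (2 * (s i) ^ 2)|
        ≤ ∑ i, |((zstar i - μ i) ^ 2 - (z i - μ i) ^ 2) / (2 * (s i) ^ 2)| :=
          Finset.abs_sum_le_sum_abs _ _
      _ ≤ ∑ i, (b₁ + b₂) * b₃ ^ 2 * |z i - zstar i| :=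
          Finset.sum_le_sum fun i _ => hterm i
      _ = (b₁ + b₂) * b₃ ^ 2 * ∑ i, |z i - zstar i| := by rw [Finset.mul_sum]
  -- ℓ1 ≤ √n · ℓ2
  have hnorm : ‖z - zstar‖ = Real.sqrt (∑ i, |z i - zstar i| ^ 2) := by
    rw [EuclideanSpace.norm_eq]
    simp [Real.norm_eq_abs, PiLp.sub_apply]
  have hl2 : ∑ i, |z i - zstar i| ≤ Real.sqrt n * ‖z - zstar‖ := by
    rw [hnorm]
    have hcs := Real.sum_mul_le_sqrt_mul_sqrt Finset.univ
      (fun _ : Fin n => (1:ℝ)) (fun i => |z i - zstar i|)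
    simpa using hcs
  have hc : 0 ≤ (b₁ + b₂) * b₃ ^ 2 := by positivity
  calc |gaussLogDensity n z μ s - gaussLogDensity n zstar μ s|
      ≤ (b₁ + b₂) * b₃ ^ 2 * ∑ i, |z i - zstar i| := hl1
    _ ≤ (b₁ + b₂) * b₃ ^ 2 * (Real.sqrt n * ‖z - zstar‖) :=
        mul_le_mul_of_nonneg_left hl2 hc
    _ = Real.sqrt n * (b₁ + b₂) * b₃ ^ 2 * ‖z - zstar‖ := by ring
end

section
/- (Lemma 1, robustness of the factor-out layer.) Let n, m ≥ 1 be natural numbers, let L, δ ≥ 0 and b₁, b₂, b₃ > 0 be real numbers. Let μ, σ : EuclideanSpace ℝ (Fin m) → EuclideanSpace ℝ (Fin n) both be L-Lipschitz, and let y, y⋆ ∈ EuclideanSpace ℝ (Fin m) satisfy ‖y − y⋆‖₂ ≤ δ. Assume for all i: σ(y)ᵢ ≥ 1/b₃, σ(y⋆)ᵢ ≥ 1/b₃, |μ(y)ᵢ| ≤ b₂, |μ(y⋆)ᵢ| ≤ b₂. Let z, z⋆ : Fin n → ℝ satisfy |zᵢ| ≤ b₁ and |z⋆ᵢ| ≤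 b₁ for every i, and ‖z − z⋆‖₂ ≤ δ. Then |ℓ(z; μ(y), σ(y)) − ℓ(z⋆; μ(y⋆), σ(y⋆))| ≤ δ · √n · ( L·((b₁ + b₂)²·b₃³ + (b₁ + b₂)·b₃² + b₃) + (b₁ + b₂)·b₃² ). -/
lemma sum_abs_le_sqrt_mul_norm (n : ℕ) (v : EuclideanSpace ℝ (Fin n)) :
    ∑ i, |v i| ≤ Real.sqrt n * ‖v‖ := by
  have h1 : (∑ i, |v i|) ^ 2 ≤ (n : ℝ) * ∑ i, (v i) ^ 2 := by
    have := sq_sum_le_card_mul_sum_sq (s := Finset.univ) (f := fun i => |v i|)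
    simpa [sq_abs] using this
  have hnorm : ‖v‖ = Real.sqrt (∑ i, (v i) ^ 2) := by
    simpa using EuclideanSpace.norm_eq v
  have h2 : ∑ i, |v i| ≤ Real.sqrt ((n : ℝ) * ∑ i, (v i) ^ 2) := by
    have := Real.sqrt_le_sqrt h1
    rwa [Real.sqrt_sq (by positivity)] at this
  calc ∑ i, |v i| ≤ Real.sqrt ((n : ℝ) * ∑ i, (v i) ^ 2) := h2
    _ = Real.sqrt n * ‖v‖ := by
        rw [Real.sqrt_mul (by positivity), hnorm]

set_option maxHeartbeats 1000000 in
lemma quad_lip_s6 {b₁ b₂ b₃ zz zz' mm mm' s s' : ℝ} (hb₁ : 0 < b₁) (hb₂ : 0 < b₂)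
    (hb₃ : 0 < b₃)
    (hz : |zz| ≤ b₁) (hz' : |zz'| ≤ b₁) (hm : |mm| ≤ b₂) (hm' : |mm'| ≤ b₂)
    (hs : 1 / b₃ ≤ s) (hs' : 1 / b₃ ≤ s') :
    |(zz - mm) ^ 2 / (2 * s ^ 2) - (zz' - mm') ^ 2 / (2 * s' ^ 2)| ≤
      (b₁ + b₂) * b₃ ^ 2 * |zz - zz'| + (b₁ + b₂) * b₃ ^ 2 * |mm - mm'|
        + (b₁ + b₂) ^ 2 * b₃ ^ 3 * |s - s'| := by
  have hb₃' : 0 < 1 / b₃ := by positivity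
  have hs0 : 0 < s := lt_of_lt_of_le hb₃' hs
  have hs0' : 0 < s' := lt_of_lt_of_le hb₃' hs'
  have hsb : 1 ≤ b₃ * s := by
    have h := mul_le_mul_of_nonneg_left hs hb₃.le
    rwa [mul_one_div, div_self (ne_of_gt hb₃)] at h
  have hsb' : 1 ≤ b₃ * s' := by
    have h := mul_le_mul_of_nonneg_left hs' hb₃.le
    rwa [mul_one_div, div_self (ne_of_gt hb₃)] at h
  have hsq : 1 ≤ b₃ ^ 2 * s ^ 2 := by nlinarith
  -- step 1: change zz to zz'
  have E1 : |(zz - mm) ^ 2 / (2 * s ^ 2) - (zz' - mm) ^ 2 / (2 * s ^ 2)| ≤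
      (b₁ + b₂) * b₃ ^ 2 * |zz - zz'| := by
    have heq : (zz - mm) ^ 2 / (2 * s ^ 2) - (zz' - mm) ^ 2 / (2 * s ^ 2)
        = ((zz - zz') * (zz + zz' - 2 * mm)) / (2 * s ^ 2) := by ring
    rw [heq, abs_div, abs_mul, abs_of_pos (by positivity : (0:ℝ) < 2 * s ^ 2),
      div_le_iff₀ (by positivity)]
    have h1 : |zz + zz' - 2 * mm| ≤ 2 * (b₁ + b₂) := by
      have h2 : |zz + zz' - 2 * mm| ≤ |zz + zz'| + |2 * mm| := by
        simpa [sub_eq_add_neg, abs_neg] using abs_add_le (zz + zz') (-(2 * mm))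
      have h3 : |zz + zz'| ≤ |zz| + |zz'| := abs_add_le zz zz'
      have h4 : |2 * mm| = 2 * |mm| := by rw [abs_mul, abs_two]
      linarith
    calc |zz - zz'| * |zz + zz' - 2 * mm|
        ≤ |zz - zz'| * (2 * (b₁ + b₂)) := mul_le_mul_of_nonneg_left h1 (abs_nonneg _)
      _ = |zz - zz'| * (2 * (b₁ + b₂)) * 1 := by ring
      _ ≤ |zz - zz'| * (2 * (b₁ + b₂)) * (b₃ ^ 2 * s ^ 2) := by
          apply mul_le_mul_of_nonneg_left hsq (by positivity)
      _ = (b₁ + b₂) * b₃ ^ 2 * |zz - zz'| * (2 * s ^ 2) := by ring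
  -- step 2: change mm to mm'
  have E2 : |(zz' - mm) ^ 2 / (2 * s ^ 2) - (zz' - mm') ^ 2 / (2 * s ^ 2)| ≤
      (b₁ + b₂) * b₃ ^ 2 * |mm - mm'| := by
    have heq : (zz' - mm) ^ 2 / (2 * s ^ 2) - (zz' - mm') ^ 2 / (2 * s ^ 2)
        = ((mm - mm') * (mm + mm' - 2 * zz')) / (2 * s ^ 2) := by ring
    rw [heq, abs_div, abs_mul, abs_of_pos (by positivity : (0:ℝ) < 2 * s ^ 2),
      div_le_iff₀ (by positivity)]
    have h1 : |mm + mm' - 2 * zz'| ≤ 2 * (b₁ + b₂) := by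
      have h2 : |mm + mm' - 2 * zz'| ≤ |mm + mm'| + |2 * zz'| := by
        simpa [sub_eq_add_neg, abs_neg] using abs_add_le (mm + mm') (-(2 * zz'))
      have h3 : |mm + mm'| ≤ |mm| + |mm'| := abs_add_le mm mm'
      have h4 : |2 * zz'| = 2 * |zz'| := by rw [abs_mul, abs_two]
      linarith
    calc |mm - mm'| * |mm + mm' - 2 * zz'|
        ≤ |mm - mm'| * (2 * (b₁ + b₂)) := mul_le_mul_of_nonneg_left h1 (abs_nonneg _)
      _ = |mm - mm'| * (2 * (b₁ + b₂)) * 1 := by ring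
      _ ≤ |mm - mm'| * (2 * (b₁ + b₂)) * (b₃ ^ 2 * s ^ 2) := by
          apply mul_le_mul_of_nonneg_left hsq (by positivity)
      _ = (b₁ + b₂) * b₃ ^ 2 * |mm - mm'| * (2 * s ^ 2) := by ring
  -- step 3: change s to s'
  have E3 : |(zz' - mm') ^ 2 / (2 * s ^ 2) - (zz' - mm') ^ 2 / (2 * s' ^ 2)| ≤
      (b₁ + b₂) ^ 2 * b₃ ^ 3 * |s - s'| := by
    have heq : (zz' - mm') ^ 2 / (2 * s ^ 2) - (zz' - mm') ^ 2 / (2 * s' ^ 2)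
        = ((zz' - mm') ^ 2 * ((s' - s) * (s' + s))) / (2 * s ^ 2 * s' ^ 2) := by
      field_simp
      ring
    rw [heq, abs_div, abs_of_pos (by positivity : (0:ℝ) < 2 * s ^ 2 * s' ^ 2),
      div_le_iff₀ (by positivity)]
    have h1 : |(zz' - mm') ^ 2 * ((s' - s) * (s' + s))|
        = (zz' - mm') ^ 2 * (|s - s'| * (s' + s)) := by
      rw [abs_mul, abs_mul, abs_of_nonneg (by positivity : (0:ℝ) ≤ (zz' - mm') ^ 2),
        abs_of_pos (by linarith : (0:ℝ) < s' + s), abs_sub_comm]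
    rw [h1]
    have hzm : (zz' - mm') ^ 2 ≤ (b₁ + b₂) ^ 2 := by
      have habs : |zz' - mm'| ≤ b₁ + b₂ := by
        have h5 : |zz' - mm'| ≤ |zz'| + |mm'| := by
          simpa [sub_eq_add_neg, abs_neg] using abs_add_le zz' (-mm')
        linarith
      nlinarith [abs_nonneg (zz' - mm'), sq_abs (zz' - mm')]
    have hA : 1 ≤ (b₃ * s) * ((b₃ * s') * (b₃ * s')) := by nlinarith
    have hB : 1 ≤ (b₃ * s') * ((b₃ * s) * (b₃ * s)) := by nlinarith
    have hkey : s' + s ≤ b₃ ^ 3 * (2 * s ^ 2 * s' ^ 2) := by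
      have hA' : s ≤ s * ((b₃ * s) * ((b₃ * s') * (b₃ * s'))) := by
        nlinarith [mul_le_mul_of_nonneg_left hA hs0.le]
      have hB' : s' ≤ s' * ((b₃ * s') * ((b₃ * s) * (b₃ * s))) := by
        nlinarith [mul_le_mul_of_nonneg_left hB hs0'.le]
      nlinarith [hA', hB']
    calc (zz' - mm') ^ 2 * (|s - s'| * (s' + s))
        ≤ (b₁ + b₂) ^ 2 * (|s - s'| * (b₃ ^ 3 * (2 * s ^ 2 * s' ^ 2))) := by
          apply mul_le_mul hzm (mul_le_mul_of_nonneg_left hkey (abs_nonneg _))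
            (by positivity) (by positivity)
      _ = (b₁ + b₂) ^ 2 * b₃ ^ 3 * |s - s'| * (2 * s ^ 2 * s' ^ 2) := by ring
  have tri : |(zz - mm) ^ 2 / (2 * s ^ 2) - (zz' - mm') ^ 2 / (2 * s' ^ 2)|
      ≤ |(zz - mm) ^ 2 / (2 * s ^ 2) - (zz' - mm) ^ 2 / (2 * s ^ 2)|
        + |(zz' - mm) ^ 2 / (2 * s ^ 2) - (zz' - mm') ^ 2 / (2 * s ^ 2)|
        + |(zz' - mm') ^ 2 / (2 * s ^ 2) - (zz' - mm') ^ 2 / (2 * s' ^ 2)| := by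
    have t1 := abs_sub_le ((zz - mm) ^ 2 / (2 * s ^ 2)) ((zz' - mm) ^ 2 / (2 * s ^ 2))
      ((zz' - mm') ^ 2 / (2 * s' ^ 2))
    have t2 := abs_sub_le ((zz' - mm) ^ 2 / (2 * s ^ 2)) ((zz' - mm') ^ 2 / (2 * s ^ 2))
      ((zz' - mm') ^ 2 / (2 * s' ^ 2))
    linarith
  linarith [tri, E1, E2, E3]


set_option maxHeartbeats 1000000 in
/-- **Lemma 1, robustness of the factor-out layer.** Perturbing both the
conditioning input `y` and the latent `z` by at most `δ` in Euclidean norm changes the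
factor-out layer's log-likelihood by at most
`δ·√n·(L·((b₁+b₂)²b₃³ + (b₁+b₂)b₃² + b₃) + (b₁+b₂)b₃²)`. -/
theorem factor_out_layer_robustness
    (n m : ℕ) (hn : 1 ≤ n) (hm : 1 ≤ m)
    (L δ : ℝ) (hL : 0 ≤ L) (hδ : 0 ≤ δ)
    (b₁ b₂ b₃ : ℝ) (hb₁ : 0 < b₁) (hb₂ : 0 < b₂) (hb₃ : 0 < b₃)
    (μ σ : EuclideanSpace ℝ (Fin m) → EuclideanSpace ℝ (Fin n))
    (hμlip : ∀ a b : EuclideanSpace ℝ (Fin m), ‖μ a - μ b‖ ≤ L * ‖a - b‖)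
    (hσlip : ∀ a b : EuclideanSpace ℝ (Fin m), ‖σ a - σ b‖ ≤ L * ‖a - b‖)
    (y ystar : EuclideanSpace ℝ (Fin m))
    (hy : ‖y - ystar‖ ≤ δ)
    (hσy : ∀ i : Fin n, 1 / b₃ ≤ σ y i)
    (hσystar : ∀ i : Fin n, 1 / b₃ ≤ σ ystar i)
    (hμy : ∀ i : Fin n, |μ y i| ≤ b₂)
    (hμystar : ∀ i : Fin n, |μ ystar i| ≤ b₂)
    (z zstar : EuclideanSpace ℝ (Fin n))
    (hz : ∀ i, |z i| ≤ b₁) (hzstar : ∀ i, |zstar i| ≤ b₁)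
    (hzz : ‖z - zstar‖ ≤ δ) :
    |gaussLogDensity n z (μ y) (σ y) - gaussLogDensity n zstar (μ ystar) (σ ystar)| ≤
      δ * Real.sqrt n *
        (L * ((b₁ + b₂) ^ 2 * b₃ ^ 3 + (b₁ + b₂) * b₃ ^ 2 + b₃) + (b₁ + b₂) * b₃ ^ 2) := by
  have hsn : (0:ℝ) ≤ Real.sqrt n := Real.sqrt_nonneg _
  have key : ∀ (u v : EuclideanSpace ℝ (Fin n)) (c : ℝ), ‖u - v‖ ≤ c →
      ∑ i, |u i - v i| ≤ Real.sqrt n * c := by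
    intro u v c h
    have h1 := sum_abs_le_sqrt_mul_norm n (u - v)
    have h2 : ∑ i, |u i - v i| = ∑ i, |(u - v) i| :=
      Finset.sum_congr rfl (fun i _ => rfl)
    rw [h2]
    calc ∑ i, |(u - v) i| ≤ Real.sqrt n * ‖u - v‖ := h1
      _ ≤ Real.sqrt n * c := mul_le_mul_of_nonneg_left h hsn
  have hLδ : L * ‖y - ystar‖ ≤ L * δ := mul_le_mul_of_nonneg_left hy hL
  have hsz : ∑ i, |z i - zstar i| ≤ Real.sqrt n * δ := key z zstar δ hzz
  have hsμ : ∑ i, |μ y i - μ ystar i| ≤ Real.sqrt n * (L * δ) :=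
    key _ _ _ (le_trans (hμlip y ystar) hLδ)
  have hsσ : ∑ i, |σ y i - σ ystar i| ≤ Real.sqrt n * (L * δ) :=
    key _ _ _ (le_trans (hσlip y ystar) hLδ)
  have hA0 : (0:ℝ) ≤ (b₁ + b₂) * b₃ ^ 2 := by positivity
  have hB0 : (0:ℝ) ≤ (b₁ + b₂) ^ 2 * b₃ ^ 3 := by positivity
  have hlogsum : ∑ i, |Real.log (σ y i) - Real.log (σ ystar i)|
      ≤ b₃ * (Real.sqrt n * (L * δ)) := by
    calc ∑ i, |Real.log (σ y i) - Real.log (σ ystar i)|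
        ≤ ∑ i, b₃ * |σ y i - σ ystar i| :=
          Finset.sum_le_sum (fun i _ => log_lip hb₃ (hσy i) (hσystar i))
      _ = b₃ * ∑ i, |σ y i - σ ystar i| := by rw [Finset.mul_sum]
      _ ≤ b₃ * (Real.sqrt n * (L * δ)) := mul_le_mul_of_nonneg_left hsσ hb₃.le
  have hqsum : ∑ i, |(z i - μ y i) ^ 2 / (2 * (σ y i) ^ 2)
        - (zstar i - μ ystar i) ^ 2 / (2 * (σ ystar i) ^ 2)|
      ≤ (b₁ + b₂) * b₃ ^ 2 * (Real.sqrt n * δ)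
        + (b₁ + b₂) * b₃ ^ 2 * (Real.sqrt n * (L * δ))
        + (b₁ + b₂) ^ 2 * b₃ ^ 3 * (Real.sqrt n * (L * δ)) := by
    calc ∑ i, |(z i - μ y i) ^ 2 / (2 * (σ y i) ^ 2)
          - (zstar i - μ ystar i) ^ 2 / (2 * (σ ystar i) ^ 2)|
        ≤ ∑ i, ((b₁ + b₂) * b₃ ^ 2 * |z i - zstar i|
            + (b₁ + b₂) * b₃ ^ 2 * |μ y i - μ ystar i|
            + (b₁ + b₂) ^ 2 * b₃ ^ 3 * |σ y i - σ ystar i|) :=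
          Finset.sum_le_sum (fun i _ => quad_lip_s6 hb₁ hb₂ hb₃ (hz i) (hzstar i)
            (hμy i) (hμystar i) (hσy i) (hσystar i))
      _ = (b₁ + b₂) * b₃ ^ 2 * ∑ i, |z i - zstar i|
            + (b₁ + b₂) * b₃ ^ 2 * ∑ i, |μ y i - μ ystar i|
            + (b₁ + b₂) ^ 2 * b₃ ^ 3 * ∑ i, |σ y i - σ ystar i| := by
          rw [Finset.sum_add_distrib, Finset.sum_add_distrib, Finset.mul_sum,
            Finset.mul_sum, Finset.mul_sum]
      _ ≤ _ := by
          have h1 := mul_le_mul_of_nonneg_left hsz hA0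
          have h2 := mul_le_mul_of_nonneg_left hsμ hA0
          have h3 := mul_le_mul_of_nonneg_left hsσ hB0
          linarith
  have hdiff : gaussLogDensity n z (μ y) (σ y) - gaussLogDensity n zstar (μ ystar) (σ ystar)
      = (∑ i, (Real.log (σ ystar i) - Real.log (σ y i)))
        + ∑ i, ((zstar i - μ ystar i) ^ 2 / (2 * (σ ystar i) ^ 2)
            - (z i - μ y i) ^ 2 / (2 * (σ y i) ^ 2)) := by
    simp only [gaussLogDensity, Finset.sum_sub_distrib]
    ring
  rw [hdiff]
  have t1 : |∑ i, (Real.log (σ ystar i) - Real.log (σ y i))|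
      ≤ b₃ * (Real.sqrt n * (L * δ)) := by
    calc |∑ i, (Real.log (σ ystar i) - Real.log (σ y i))|
        ≤ ∑ i, |Real.log (σ ystar i) - Real.log (σ y i)| :=
          Finset.abs_sum_le_sum_abs _ _
      _ = ∑ i, |Real.log (σ y i) - Real.log (σ ystar i)| :=
          Finset.sum_congr rfl (fun i _ => abs_sub_comm _ _)
      _ ≤ _ := hlogsum
  have t2 : |∑ i, ((zstar i - μ ystar i) ^ 2 / (2 * (σ ystar i) ^ 2)
        - (z i - μ y i) ^ 2 / (2 * (σ y i) ^ 2))|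
      ≤ (b₁ + b₂) * b₃ ^ 2 * (Real.sqrt n * δ)
        + (b₁ + b₂) * b₃ ^ 2 * (Real.sqrt n * (L * δ))
        + (b₁ + b₂) ^ 2 * b₃ ^ 3 * (Real.sqrt n * (L * δ)) := by
    calc |∑ i, ((zstar i - μ ystar i) ^ 2 / (2 * (σ ystar i) ^ 2)
          - (z i - μ y i) ^ 2 / (2 * (σ y i) ^ 2))|
        ≤ ∑ i, |(zstar i - μ ystar i) ^ 2 / (2 * (σ ystar i) ^ 2)
            - (z i - μ y i) ^ 2 / (2 * (σ y i) ^ 2)| := Finset.abs_sum_le_sum_abs _ _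
      _ = ∑ i, |(z i - μ y i) ^ 2 / (2 * (σ y i) ^ 2)
            - (zstar i - μ ystar i) ^ 2 / (2 * (σ ystar i) ^ 2)| :=
          Finset.sum_congr rfl (fun i _ => abs_sub_comm _ _)
      _ ≤ _ := hqsum
  have tri := abs_add_le (∑ i, (Real.log (σ ystar i) - Real.log (σ y i)))
    (∑ i, ((zstar i - μ ystar i) ^ 2 / (2 * (σ ystar i) ^ 2)
      - (z i - μ y i) ^ 2 / (2 * (σ y i) ^ 2)))
  have hring : δ * Real.sqrt n *
      (L * ((b₁ + b₂) ^ 2 * b₃ ^ 3 + (b₁ + b₂) * b₃ ^ 2 + b₃) + (b₁ + b₂) * b₃ ^ 2)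
      = b₃ * (Real.sqrt n * (L * δ))
        + ((b₁ + b₂) * b₃ ^ 2 * (Real.sqrt n * δ)
          + (b₁ + b₂) * b₃ ^ 2 * (Real.sqrt n * (L * δ))
          + (b₁ + b₂) ^ 2 * b₃ ^ 3 * (Real.sqrt n * (L * δ))) := by ring
  linarith [tri, t1, t2]
end

section
/- (Lemma 2, robustness of the main-flow.) Let n, m ≥ 1 be natural numbers and L, δ ≥ 0 real numbers. Let f : EuclideanSpace ℝ (Fin m) → EuclideanSpace ℝ (Fin n) be L-Lipschitz and let x, x⋆ ∈ EuclideanSpace ℝ (Fin m) satisfy ‖x⋆ − x‖₂ ≤ δ. Put z = f(x), z⋆ = f(x⋆), and let g(v) = −‖v‖₂²/2 − (n/2)·log(2π) denote the log-density of the standard Gaussian N(0, Iₙ). Then g(z⋆) − g(z) ≥ −L·δ·‖z‖₂ − L²·δ²/2. -/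
/-- **Lemma 2, robustness of the main-flow.** If the main-flow
`f` is `L`-Lipschitz and the input is perturbed by at most `δ` in Euclidean norm,
the standard-Gaussian log-density `g(v) = −‖v‖²/2 − (n/2)·log(2π)` of the latent
drops by at most `L·δ·‖z‖ + L²·δ²/2`. -/
theorem main_flow_robustness
    (n m : ℕ) (hn : 1 ≤ n) (hm : 1 ≤ m)
    (L δ : ℝ) (hL : 0 ≤ L) (hδ : 0 ≤ δ)
    (f : EuclideanSpace ℝ (Fin m) → EuclideanSpace ℝ (Fin n))
    (hf : ∀ a b : EuclideanSpace ℝ (Fin m), ‖f a - f b‖ ≤ L * ‖a - b‖)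
    (x xstar : EuclideanSpace ℝ (Fin m))
    (hx : ‖xstar - x‖ ≤ δ) :
    (fun v : EuclideanSpace ℝ (Fin n) =>
        -‖v‖ ^ 2 / 2 - (n : ℝ) / 2 * Real.log (2 * Real.pi)) (f xstar) -
      (fun v : EuclideanSpace ℝ (Fin n) =>
        -‖v‖ ^ 2 / 2 - (n : ℝ) / 2 * Real.log (2 * Real.pi)) (f x) ≥
      -(L * δ * ‖f x‖) - L ^ 2 * δ ^ 2 / 2 := by
  simp only []
  have h1 : ‖f xstar - f x‖ ≤ L * δ := le_trans (hf _ _) (by nlinarith [hf xstar x])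
  have h2 : ‖f xstar‖ ≤ ‖f x‖ + L * δ := by
    calc ‖f xstar‖ ≤ ‖f x‖ + ‖f xstar - f x‖ := by
          have := norm_sub_norm_le (f xstar) (f x); linarith
      _ ≤ ‖f x‖ + L * δ := by linarith
  have h3 : (0:ℝ) ≤ ‖f xstar‖ := norm_nonneg _
  have h4 : (0:ℝ) ≤ ‖f x‖ := norm_nonneg _
  nlinarith [sq_nonneg (‖f xstar‖ - ‖f x‖)]
end
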